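/- For a positive integer n, the binomial coefficient C(2n-1, n-1) is odd if and only if n is a power of 2. -/

import Mathlib

lemma digitsum_pos {n : ℕ} (hn : 0 < n) : 0 < (Nat.digits 2 n).sum := by
  induction n using Nat.strong_induction_on with
  | _ n ih =>
    rw [Nat.digits_def' (by norm_num : 1 < 2) hn, List.sum_cons]
    rcases Nat.even_or_odd n with he | ho
    · have hmod : n % 2 = 0 := Nat.even_iff.mp he
      have h2 : 0 < n / 2 := Nat.div_pos (by omega) (by norm_num)
      have := ih (n / 2) (Nat.div_lt_self hn (by norm_num)) h2
      omega
    · have : n % 2 = 1 := Nat.odd_iff.mp ho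
      omega

lemma digitsum_one_iff {n : ℕ} (hn : 0 < n) :
    (Nat.digits 2 n).sum = 1 ↔ ∃ k : ℕ, n = 2 ^ k := by
  induction n using Nat.strong_induction_on with
  | _ n ih =>
    rw [Nat.digits_def' (by norm_num : 1 < 2) hn, List.sum_cons]
    rcases Nat.even_or_odd n with he | ho
    · have hmod : n % 2 = 0 := Nat.even_iff.mp he
      have h2 : 0 < n / 2 := Nat.div_pos (by omega) (by norm_num)
      rw [hmod, zero_add, ih (n / 2) (Nat.div_lt_self hn (by norm_num)) h2]
      constructor
      · rintro ⟨k, hk⟩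
        exact ⟨k + 1, by omega⟩
      · rintro ⟨k, hk⟩
        cases k with
        | zero => omega
        | succ k => exact ⟨k, by rw [hk]; rw [pow_succ]; omega⟩
    · have hmod : n % 2 = 1 := Nat.odd_iff.mp ho
      rw [hmod]
      constructor
      · intro h
        have hs : (Nat.digits 2 (n / 2)).sum = 0 := by omega
        have : n / 2 = 0 := by
          by_contra hc
          have := digitsum_pos (Nat.pos_of_ne_zero hc)
          omega
        exact ⟨0, by omega⟩
      · rintro ⟨k, hk⟩
        cases k with
        | zero =>
          have : n = 1 := by simpa using hk
          subst this; simp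
        | succ k =>
          exfalso
          have : Even n := hk ▸ (by exact (Nat.even_pow.mpr ⟨even_two, by omega⟩))
          omega

theorem stmt13 (n : ℕ) (hn : 0 < n) :
    Odd ((2 * n - 1).choose (n - 1)) ↔ ∃ k : ℕ, n = 2 ^ k := by
  have hkn : n - 1 ≤ 2 * n - 1 := by omega
  have hpos : 0 < (2 * n - 1).choose (n - 1) := Nat.choose_pos hkn
  haveI : Fact (Nat.Prime 2) := ⟨Nat.prime_two⟩
  have kum := sub_one_mul_padicValNat_choose_eq_sub_sum_digits (p := 2) hkn
  have hsub : 2 * n - 1 - (n - 1) = n := by omega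
  rw [hsub] at kum
  have h2n : (Nat.digits 2 (2 * n - 1)).sum = 1 + (Nat.digits 2 (n - 1)).sum := by
    rw [Nat.digits_def' (by norm_num : 1 < 2) (by omega : 0 < 2 * n - 1), List.sum_cons]
    have h1 : (2 * n - 1) % 2 = 1 := by omega
    have h2 : (2 * n - 1) / 2 = n - 1 := by omega
    rw [h1, h2]
  have hsn : 0 < (Nat.digits 2 n).sum := digitsum_pos hn
  have hval : padicValNat 2 ((2 * n - 1).choose (n - 1)) = (Nat.digits 2 n).sum - 1 := by
    omega
  rw [← digitsum_one_iff hn]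
  constructor
  · intro hodd
    have hm := Nat.odd_iff.mp hodd
    have : padicValNat 2 ((2 * n - 1).choose (n - 1)) = 0 :=
      padicValNat.eq_zero_of_not_dvd (by omega)
    omega
  · intro hs
    have hv0 : padicValNat 2 ((2 * n - 1).choose (n - 1)) = 0 := by omega
    have hnd : ¬ 2 ∣ (2 * n - 1).choose (n - 1) := fun hdvd => by
      have := one_le_padicValNat_of_dvd hpos.ne' hdvd
      omega
    rw [Nat.odd_iff]
    omega
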